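/- Let n ≥ 1 and let p = (p_1, …, p_n) be a probability vector on {1, …, n}; define b = Σ_{j=1}^n p_j log₂(n p_j) (with the convention 0·log 0 = 0). For each integer i ≥ 1 let S_i = { j : 2^i ≤ n·p_j < 2^{i+1} } and t_i = Σ_{j ∈ S_i} p_j. Then Σ_{i ≥ 1} i · t_i < b + 1. -/

import Mathlib

open Finset Real

private lemma neg_mul_log_le' (x : ℝ) (hx : 0 < x) : -(x * Real.log x) ≤ (Real.exp 1)⁻¹ := by
  have h := Real.add_one_le_exp (-(Real.log x) - 1)
  have he : Real.exp (-(Real.log x) - 1) = Real.exp (-1) / x := by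
    rw [Real.exp_sub, Real.exp_neg, Real.exp_neg, Real.exp_log hx]
    ring
  rw [he] at h
  have h2 : -Real.log x ≤ Real.exp (-1) / x := by linarith
  have h3 := mul_le_mul_of_nonneg_left h2 hx.le
  rw [Real.exp_neg] at h3
  calc -(x * Real.log x) = x * (-Real.log x) := by ring
    _ ≤ x * ((Real.exp 1)⁻¹ / x) := h3
    _ = (Real.exp 1)⁻¹ := by
        field_simp

/-- Dyadic bucketing of a probability vector by its divergence from uniform: with
`b = ∑ⱼ pⱼ log₂(n pⱼ)`, `Sᵢ = {j : 2^i ≤ n pⱼ < 2^{i+1}}` and `tᵢ = ∑_{j ∈ Sᵢ} pⱼ`,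
one has `∑_{i ≥ 1} i·tᵢ < b + 1`. -/
theorem dyadic_bucket_bound (n : ℕ) (hn : 1 ≤ n) (p : Fin n → ℝ)
    (hp : ∀ j, 0 ≤ p j) (hpsum : ∑ j, p j = 1) :
    ∑' i : ℕ, (i : ℝ) *
        (∑ j ∈ Finset.univ.filter
            (fun j => 2 ^ i ≤ (n : ℝ) * p j ∧ (n : ℝ) * p j < 2 ^ (i + 1)), p j)
      < (∑ j, p j * Real.logb 2 ((n : ℝ) * p j)) + 1 := by
  have hn1 : (1:ℝ) ≤ n := by exact_mod_cast hn
  have hlog2 : (0:ℝ) < Real.log 2 := Real.log_pos (by norm_num)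
  have hexp : (0:ℝ) < Real.exp 1 := Real.exp_pos 1
  have hple : ∀ j, p j ≤ 1 := by
    intro j
    rw [← hpsum]
    exact Finset.single_le_sum (fun k _ => hp k) (Finset.mem_univ j)
  have hnp_le : ∀ j, (n:ℝ) * p j ≤ n := by
    intro j
    nlinarith [hple j, hp j]
  set S : ℕ → Finset (Fin n) := fun i => Finset.univ.filter
      (fun j => 2 ^ i ≤ (n : ℝ) * p j ∧ (n : ℝ) * p j < 2 ^ (i + 1)) with hSdef
  set L : Fin n → ℝ := fun j => Real.logb 2 ((n : ℝ) * p j) with hLdef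
  -- the terms vanish outside range (n+1)
  have hzero : ∀ i ∉ Finset.range (n+1), (i : ℝ) * (∑ j ∈ S i, p j) = 0 := by
    intro i hi
    have hSe : S i = ∅ := by
      rw [Finset.eq_empty_iff_forall_notMem]
      intro j hj
      rw [hSdef, Finset.mem_filter] at hj
      have h1 : (2:ℝ)^i ≤ n * p j := hj.2.1
      have h2 : (n:ℝ) < 2^(n+1) := by
        exact_mod_cast (Nat.lt_two_pow_self (n := n)).trans
          (Nat.pow_lt_pow_right one_lt_two (Nat.lt_succ_self n))
      have h3 : (2:ℝ)^(n+1) ≤ 2^i := by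
        apply pow_le_pow_right₀ (by norm_num)
        simpa using hi
      linarith [hnp_le j]
    rw [hSe]
    simp
  rw [tsum_eq_sum hzero]
  set T : Finset (Fin n) := Finset.univ.filter (fun j => 1 ≤ (n:ℝ) * p j) with hTdef
  -- main upper bound by the positive part
  have key1 : ∑ i ∈ Finset.range (n+1), (i : ℝ) * (∑ j ∈ S i, p j)
      ≤ ∑ j ∈ T, p j * L j := by
    have hdisj : Set.PairwiseDisjoint (↑(Finset.range (n+1)) : Set ℕ) S := by
      intro i _ i' _ hne
      simp only [Function.onFun]
      rw [Finset.disjoint_left]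
      intro j hji hji'
      rw [hSdef, Finset.mem_filter] at hji hji'
      rcases Ne.lt_or_gt hne with h | h
      · have : (2:ℝ)^(i+1) ≤ 2^i' := pow_le_pow_right₀ (by norm_num) h
        linarith [hji.2.2, hji'.2.1]
      · have : (2:ℝ)^(i'+1) ≤ 2^i := pow_le_pow_right₀ (by norm_num) h
        linarith [hji'.2.2, hji.2.1]
    have hsub : (Finset.range (n+1)).biUnion S ⊆ T := by
      intro j hj
      rw [Finset.mem_biUnion] at hj
      obtain ⟨i, _, hji⟩ := hj
      rw [hSdef, Finset.mem_filter] at hji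
      rw [hTdef, Finset.mem_filter]
      refine ⟨Finset.mem_univ j, ?_⟩
      have : (1:ℝ) ≤ 2^i := one_le_pow₀ (by norm_num : (1:ℝ) ≤ 2)
      linarith [hji.2.1]
    calc ∑ i ∈ Finset.range (n+1), (i : ℝ) * (∑ j ∈ S i, p j)
        = ∑ i ∈ Finset.range (n+1), ∑ j ∈ S i, (i:ℝ) * p j := by
          simp [Finset.mul_sum]
      _ ≤ ∑ i ∈ Finset.range (n+1), ∑ j ∈ S i, p j * L j := by
          apply Finset.sum_le_sum
          intro i _
          apply Finset.sum_le_sum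
          intro j hj
          rw [hSdef, Finset.mem_filter] at hj
          have h2i : (2:ℝ)^i ≤ n * p j := hj.2.1
          have hpos : (0:ℝ) < n * p j := lt_of_lt_of_le (by positivity) h2i
          have hiL : (i:ℝ) ≤ L j := by
            have heq : Real.logb 2 ((2:ℝ)^i) = i := by
              rw [Real.logb_pow, Real.logb_self_eq_one (by norm_num), mul_one]
            rw [hLdef]
            calc (i:ℝ) = Real.logb 2 ((2:ℝ)^i) := heq.symm
              _ ≤ Real.logb 2 ((n:ℝ) * p j) :=
                  Real.logb_le_logb_of_le (by norm_num) (by positivity) h2i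
          nlinarith [hp j, hiL]
      _ = ∑ j ∈ (Finset.range (n+1)).biUnion S, p j * L j :=
          (Finset.sum_biUnion hdisj).symm
      _ ≤ ∑ j ∈ T, p j * L j := by
          apply Finset.sum_le_sum_of_subset_of_nonneg hsub
          intro j hjT _
          rw [hTdef, Finset.mem_filter] at hjT
          exact mul_nonneg (hp j) (Real.logb_nonneg (by norm_num) hjT.2)
  -- splitting b
  have hsplit : (∑ j ∈ T, p j * L j)
      + (∑ j ∈ Finset.univ.filter (fun j => ¬ (1 ≤ (n:ℝ) * p j)), p j * L j)
      = ∑ j, p j * L j := by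
    rw [hTdef]
    exact Finset.sum_filter_add_sum_filter_not _ _ _
  set Tc : Finset (Fin n) := Finset.univ.filter (fun j => ¬ (1 ≤ (n:ℝ) * p j)) with hTcdef
  have hterm : ∀ j ∈ Tc, -(1/((n:ℝ) * Real.exp 1 * Real.log 2)) ≤ p j * L j := by
    intro j _
    rcases eq_or_lt_of_le (hp j) with h0 | h0
    · have hz : p j * L j = 0 := by rw [← h0]; ring
      rw [hz]
      have : (0:ℝ) < 1/((n:ℝ) * Real.exp 1 * Real.log 2) := by positivity
      linarith
    · have hx : (0:ℝ) < (n:ℝ) * p j := by positivity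
      have h1 := neg_mul_log_le' ((n:ℝ) * p j) hx
      have hLeq : p j * L j
          = ((n:ℝ) * p j * Real.log ((n:ℝ) * p j)) / ((n:ℝ) * Real.log 2) := by
        rw [hLdef]
        simp only [← Real.log_div_log]
        field_simp
      rw [hLeq, le_div_iff₀ (by positivity)]
      have heq : -(1/((n:ℝ) * Real.exp 1 * Real.log 2)) * ((n:ℝ) * Real.log 2)
          = -(Real.exp 1)⁻¹ := by
        field_simp
      rw [heq]
      linarith
  have hcard : (Tc.card : ℝ) ≤ n := by
    have h := Finset.card_filter_le (Finset.univ : Finset (Fin n))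
      (fun j => ¬ (1 ≤ (n:ℝ) * p j))
    rw [Finset.card_univ, Fintype.card_fin] at h
    exact_mod_cast h
  have hsumTc : -(1/(Real.exp 1 * Real.log 2)) ≤ ∑ j ∈ Tc, p j * L j := by
    have h := Finset.card_nsmul_le_sum Tc _ _ hterm
    rw [nsmul_eq_mul] at h
    have hpos : (0:ℝ) < Real.exp 1 * Real.log 2 := by positivity
    have h2 : (Tc.card : ℝ) * (1/((n:ℝ) * Real.exp 1 * Real.log 2))
        ≤ 1/(Real.exp 1 * Real.log 2) := by
      rw [mul_one_div, div_le_div_iff₀ (by positivity) hpos]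
      nlinarith [mul_le_mul_of_nonneg_right hcard hpos.le]
    have h3 : -(1/(Real.exp 1 * Real.log 2))
        ≤ (Tc.card : ℝ) * (-(1/((n:ℝ) * Real.exp 1 * Real.log 2))) := by
      rw [mul_neg]
      linarith
    linarith
  have hfinal : 1/(Real.exp 1 * Real.log 2) < 1 := by
    have h1 : (2.7182818283 : ℝ) < Real.exp 1 := Real.exp_one_gt_d9
    have h2 : (0.6931471803 : ℝ) < Real.log 2 := Real.log_two_gt_d9
    rw [div_lt_one (by positivity)]
    nlinarith
  linarith
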